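/- Let n ≥ 1, 1 ≤ m < 2^{n/2}, and k ≥ 1 be integers. Let R = 𝒳 × 𝒴 ⊆ {0,1}^{nm} × {0,1}^{nm} be a rectangle of size at least 2^{2nm−m+2+(2n+2)k}, and let s_1, …, s_k ∈ {0,1}^n be any k strings. Then there exists a subrectangle R' of R of size at least 2^{−(2n+2)k}·|R| such that for every (X,Y) ∈ R', none of s_1, …, s_k is a solution to XOR-Missing-String on (X,Y). -/

import Mathlib

open Finset

private lemma nat_helper1 {a b c : ℕ} (h1 : a + b = c) (h2 : 2 * a ≤ c) : c ≤ 2 * b := by omega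

private lemma nat_helper2 {a b : ℕ} (h : 4 * a ≤ 4 * b) : a ≤ b := by omega

private lemma four_mul_le (c d : ℕ) : 4 * (c * d) ≤ (c + d) * (c + d) := by
  have h : (4:ℤ) * ((c:ℤ) * (d:ℤ)) ≤ ((c:ℤ) + (d:ℤ)) * ((c:ℤ) + (d:ℤ)) := by
    nlinarith [sq_nonneg ((c:ℤ) - (d:ℤ))]
  exact_mod_cast h

private lemma exp_eq1 (n : ℕ) (hn : 1 ≤ n) : n + n = 2 + (2 * n - 2) := by omega

private lemma exp_lt (n m : ℕ) (hn : 1 ≤ n) (hm : 1 ≤ m) :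
    (2 * n - 2) * m + 2 < 2 * n * m - m + 2 := by
  have h1 : (2 * n - 2) * m = 2 * (n * m) - 2 * m := by
    rw [Nat.sub_mul]; ring_nf
  have h2 : m ≤ n * m := Nat.le_mul_of_pos_left m hn
  have h3 : 2 * n * m = 2 * (n * m) := by ring
  omega

lemma ms_step (n m : ℕ) (hn : 1 ≤ n) (hm : 1 ≤ m)
    (𝒳 𝒴 : Finset (Fin m → Fin n → Bool)) (s : Fin n → Bool)
    (hsize : 2 ^ (2 * n * m - m + 2) ≤ 𝒳.card * 𝒴.card) :
    ∃ w : Fin n → Bool,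
      𝒳.card * 𝒴.card ≤ 2 ^ (2 * n + 2) *
        ((𝒳.filter fun X => ∃ i, X i = w).card *
         (𝒴.filter fun Y => ∃ j, Y j = fun t => Bool.xor (w t) (s t)).card) := by
  by_contra hcon
  push_neg at hcon
  have key : ∀ w : Fin n → Bool,
      2 ^ (n+1) * (𝒳.filter fun X => ∃ i, X i = w).card ≤ 𝒳.card ∨
      2 ^ (n+1) * (𝒴.filter fun Y => ∃ j, Y j = fun t => Bool.xor (w t) (s t)).card ≤ 𝒴.card := by
    intro w
    by_contra hb
    push_neg at hb
    obtain ⟨h1, h2⟩ := hb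
    have h3 := Nat.mul_le_mul h1 h2
    have h4 := hcon w
    have h5 : 2 ^ (n+1) * (𝒳.filter fun X => ∃ i, X i = w).card *
        (2 ^ (n+1) * (𝒴.filter fun Y => ∃ j, Y j = fun t => Bool.xor (w t) (s t)).card)
        = 2 ^ (2*n+2) * ((𝒳.filter fun X => ∃ i, X i = w).card *
          (𝒴.filter fun Y => ∃ j, Y j = fun t => Bool.xor (w t) (s t)).card) := by
      have h6 : 2*n+2 = (n+1)+(n+1) := by ring
      rw [h6, pow_add]; ring
    rw [h5] at h3
    have h7 : 𝒳.card * 𝒴.card < (𝒳.card + 1) * (𝒴.card + 1) := by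
      calc 𝒳.card * 𝒴.card < 𝒳.card * 𝒴.card + (𝒳.card + 𝒴.card + 1) :=
            Nat.lt_add_of_pos_right (Nat.succ_pos _)
        _ = (𝒳.card + 1) * (𝒴.card + 1) := by ring
    have h8 : 𝒳.card.succ * 𝒴.card.succ = (𝒳.card + 1) * (𝒴.card + 1) := rfl
    have h9 : 𝒳.card * 𝒴.card < 2 ^ (2*n+2) *
        ((𝒳.filter fun X => ∃ i, X i = w).card *
         (𝒴.filter fun Y => ∃ j, Y j = fun t => Bool.xor (w t) (s t)).card) :=
      lt_of_lt_of_le h7 (h8 ▸ h3)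
    exact absurd h4 (lt_asymm h9)
  classical
  obtain ⟨D, hD⟩ : ∃ D : Finset (Fin n → Bool),
      D = univ.filter (fun w => 2 ^ (n+1) * (𝒳.filter fun X => ∃ i, X i = w).card ≤ 𝒳.card) :=
    ⟨_, rfl⟩
  obtain ⟨C, hC⟩ : ∃ C : Finset (Fin n → Bool),
      C = univ.filter (fun w => ¬ (2 ^ (n+1) * (𝒳.filter fun X => ∃ i, X i = w).card ≤ 𝒳.card)) :=
    ⟨_, rfl⟩
  have hCD : D.card + C.card = 2 ^ n := by
    rw [hD, hC, card_filter_add_card_filter_not]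
    simp [Fintype.card_fun]
  -- X side
  have hbadX : (𝒳.filter fun X => ∃ i, X i ∈ D).card ≤
      ∑ w ∈ D, (𝒳.filter fun X => ∃ i, X i = w).card := by
    refine le_trans (card_le_card ?_) (card_biUnion_le)
    intro X hX
    simp only [mem_filter, mem_biUnion] at hX ⊢
    obtain ⟨hX𝒳, i, hi⟩ := hX
    exact ⟨X i, hi, hX𝒳, i, rfl⟩
  have hsumX : 2 ^ (n+1) * ∑ w ∈ D, (𝒳.filter fun X => ∃ i, X i = w).card
      ≤ 2 ^ n * 𝒳.card := by
    rw [mul_sum]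
    calc ∑ w ∈ D, 2 ^ (n+1) * (𝒳.filter fun X => ∃ i, X i = w).card
        ≤ ∑ _w ∈ D, 𝒳.card := by
          refine sum_le_sum ?_
          intro w hw
          rw [hD] at hw
          exact (mem_filter.mp hw).2
      _ = D.card * 𝒳.card := by rw [sum_const, smul_eq_mul]
      _ ≤ 2 ^ n * 𝒳.card := by
          refine Nat.mul_le_mul_right _ ?_
          exact hCD ▸ Nat.le_add_right _ _
  have hbadX2 : 2 ^ n * (2 * (𝒳.filter fun X => ∃ i, X i ∈ D).card) ≤ 2 ^ n * 𝒳.card := by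
    calc 2 ^ n * (2 * (𝒳.filter fun X => ∃ i, X i ∈ D).card)
        = 2 ^ (n+1) * (𝒳.filter fun X => ∃ i, X i ∈ D).card := by ring
      _ ≤ 2 ^ (n+1) * ∑ w ∈ D, (𝒳.filter fun X => ∃ i, X i = w).card :=
          Nat.mul_le_mul_left _ hbadX
      _ ≤ 2 ^ n * 𝒳.card := hsumX
  have hbadX3 : 2 * (𝒳.filter fun X => ∃ i, X i ∈ D).card ≤ 𝒳.card :=
    Nat.le_of_mul_le_mul_left hbadX2 (by positivity)
  have hsplitX : (𝒳.filter fun X => ∃ i, X i ∈ D).card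
      + (𝒳.filter fun X => ¬ ∃ i, X i ∈ D).card = 𝒳.card :=
    card_filter_add_card_filter_not _
  have hgoodX : 𝒳.card ≤ 2 * (𝒳.filter fun X => ¬ ∃ i, X i ∈ D).card :=
    nat_helper1 hsplitX hbadX3
  have hgoodXle : (𝒳.filter fun X => ¬ ∃ i, X i ∈ D).card ≤ C.card ^ m := by
    calc (𝒳.filter fun X => ¬ ∃ i, X i ∈ D).card
        ≤ (Fintype.piFinset (fun _ : Fin m => C)).card := by
          refine card_le_card ?_
          intro X hX
          rw [Fintype.mem_piFinset]
          intro i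
          simp only [mem_filter, not_exists] at hX
          rw [hC, mem_filter]
          refine ⟨mem_univ _, ?_⟩
          have := hX.2 i
          rw [hD, mem_filter] at this
          simpa using this
      _ = C.card ^ m := by
          rw [Fintype.card_piFinset]
          simp
  -- Y side
  have hYmem : ∀ w ∈ C,
      2 ^ (n+1) * (𝒴.filter fun Y => ∃ j, Y j = fun t => Bool.xor (w t) (s t)).card ≤ 𝒴.card := by
    intro w hw
    rcases key w with h | h
    · rw [hC, mem_filter] at hw
      exact absurd h hw.2
    · exact h
  have hbadY : (𝒴.filter fun Y => ∃ j, (fun t => Bool.xor (Y j t) (s t)) ∈ C).card ≤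
      ∑ w ∈ C, (𝒴.filter fun Y => ∃ j, Y j = fun t => Bool.xor (w t) (s t)).card := by
    refine le_trans (card_le_card ?_) (card_biUnion_le)
    intro Y hY
    simp only [mem_filter, mem_biUnion] at hY ⊢
    obtain ⟨hY𝒴, j, hj⟩ := hY
    refine ⟨(fun t => Bool.xor (Y j t) (s t)), hj, hY𝒴, j, ?_⟩
    funext t
    simp [Bool.xor_assoc]
  have hsumY : 2 ^ (n+1) * ∑ w ∈ C, (𝒴.filter fun Y => ∃ j, Y j = fun t => Bool.xor (w t) (s t)).card
      ≤ 2 ^ n * 𝒴.card := by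
    rw [mul_sum]
    calc ∑ w ∈ C, 2 ^ (n+1) * (𝒴.filter fun Y => ∃ j, Y j = fun t => Bool.xor (w t) (s t)).card
        ≤ ∑ _w ∈ C, 𝒴.card := sum_le_sum hYmem
      _ = C.card * 𝒴.card := by rw [sum_const, smul_eq_mul]
      _ ≤ 2 ^ n * 𝒴.card := by
          refine Nat.mul_le_mul_right _ ?_
          exact hCD ▸ Nat.le_add_left _ _
  have hbadY2 : 2 ^ n * (2 * (𝒴.filter fun Y => ∃ j, (fun t => Bool.xor (Y j t) (s t)) ∈ C).card)
      ≤ 2 ^ n * 𝒴.card := by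
    calc 2 ^ n * (2 * (𝒴.filter fun Y => ∃ j, (fun t => Bool.xor (Y j t) (s t)) ∈ C).card)
        = 2 ^ (n+1) * (𝒴.filter fun Y => ∃ j, (fun t => Bool.xor (Y j t) (s t)) ∈ C).card := by ring
      _ ≤ 2 ^ (n+1) * ∑ w ∈ C, (𝒴.filter fun Y => ∃ j, Y j = fun t => Bool.xor (w t) (s t)).card :=
          Nat.mul_le_mul_left _ hbadY
      _ ≤ 2 ^ n * 𝒴.card := hsumY
  have hbadY3 : 2 * (𝒴.filter fun Y => ∃ j, (fun t => Bool.xor (Y j t) (s t)) ∈ C).card ≤ 𝒴.card :=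
    Nat.le_of_mul_le_mul_left hbadY2 (by positivity)
  have hsplitY : (𝒴.filter fun Y => ∃ j, (fun t => Bool.xor (Y j t) (s t)) ∈ C).card
      + (𝒴.filter fun Y => ¬ ∃ j, (fun t => Bool.xor (Y j t) (s t)) ∈ C).card = 𝒴.card :=
    card_filter_add_card_filter_not _
  have hgoodY : 𝒴.card ≤ 2 * (𝒴.filter fun Y => ¬ ∃ j, (fun t => Bool.xor (Y j t) (s t)) ∈ C).card :=
    nat_helper1 hsplitY hbadY3
  have hgoodYle : (𝒴.filter fun Y => ¬ ∃ j, (fun t => Bool.xor (Y j t) (s t)) ∈ C).card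
      ≤ D.card ^ m := by
    calc (𝒴.filter fun Y => ¬ ∃ j, (fun t => Bool.xor (Y j t) (s t)) ∈ C).card
        ≤ (Fintype.piFinset (fun _ : Fin m => D)).card := by
          refine card_le_card_of_injOn (fun Y => fun j => fun t => Bool.xor (Y j t) (s t)) ?_ ?_
          · intro Y hY
            rw [Finset.mem_coe] at hY ⊢
            rw [Fintype.mem_piFinset]
            intro j
            simp only [mem_filter, not_exists] at hY
            have h2 := hY.2 j
            rw [hC, mem_filter] at h2
            rw [hD, mem_filter]
            refine ⟨mem_univ _, ?_⟩
            by_contra hcontra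
            exact h2 ⟨mem_univ _, hcontra⟩
          · intro Y1 _ Y2 _ hEq
            funext j t
            have h := congrFun (congrFun hEq j) t
            simp only at h
            revert h
            cases s t <;> cases Y1 j t <;> cases Y2 j t <;> simp
      _ = D.card ^ m := by
          rw [Fintype.card_piFinset]
          simp
  -- combine
  have hprod : 𝒳.card * 𝒴.card ≤ 4 * (C.card * D.card) ^ m := by
    calc 𝒳.card * 𝒴.card
        ≤ (2 * (𝒳.filter fun X => ¬ ∃ i, X i ∈ D).card) *
          (2 * (𝒴.filter fun Y => ¬ ∃ j, (fun t => Bool.xor (Y j t) (s t)) ∈ C).card) :=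
          Nat.mul_le_mul hgoodX hgoodY
      _ ≤ (2 * C.card ^ m) * (2 * D.card ^ m) :=
          Nat.mul_le_mul (Nat.mul_le_mul_left _ hgoodXle) (Nat.mul_le_mul_left _ hgoodYle)
      _ = 4 * (C.card * D.card) ^ m := by rw [mul_pow]; ring
  have hcd : C.card * D.card ≤ 2 ^ (2*n - 2) := by
    have h4 : 4 * (C.card * D.card) ≤ (C.card + D.card) * (C.card + D.card) := four_mul_le _ _
    have h5 : (C.card + D.card) * (C.card + D.card) = 4 * 2 ^ (2*n - 2) := by
      have hsum : C.card + D.card = 2 ^ n := by rw [add_comm]; exact hCD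
      rw [hsum, ← pow_add, exp_eq1 n hn, pow_add]
      norm_num
    exact nat_helper2 (h5 ▸ h4)
  have hfinal : 𝒳.card * 𝒴.card ≤ 2 ^ ((2*n-2) * m + 2) := by
    calc 𝒳.card * 𝒴.card ≤ 4 * (C.card * D.card) ^ m := hprod
      _ ≤ 4 * (2 ^ (2*n - 2)) ^ m := by
          exact Nat.mul_le_mul_left _ (Nat.pow_le_pow_left hcd m)
      _ = 2 ^ ((2*n-2) * m + 2) := by
          rw [← pow_mul, pow_add]
          ring
  have hexp : (2*n-2) * m + 2 < 2 * n * m - m + 2 := exp_lt n m hn hm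
  have hlt : 2 ^ ((2*n-2) * m + 2) < 2 ^ (2 * n * m - m + 2) :=
    Nat.pow_lt_pow_right (by norm_num) hexp
  exact absurd (hsize.trans hfinal) (Nat.not_le.mpr hlt)

lemma ms_aux (n m : ℕ) (hn : 1 ≤ n) (hm : 1 ≤ m) :
    ∀ (k : ℕ) (s : Fin k → Fin n → Bool) (𝒳 𝒴 : Finset (Fin m → Fin n → Bool)),
      2 ^ (2 * n * m - m + 2 + (2 * n + 2) * k) ≤ 𝒳.card * 𝒴.card →
      ∃ 𝒳' 𝒴' : Finset (Fin m → Fin n → Bool),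
        𝒳' ⊆ 𝒳 ∧ 𝒴' ⊆ 𝒴 ∧
        𝒳.card * 𝒴.card ≤ 2 ^ ((2 * n + 2) * k) * (𝒳'.card * 𝒴'.card) ∧
        ∀ X ∈ 𝒳', ∀ Y ∈ 𝒴', ∀ l : Fin k,
          ∃ i j : Fin m, s l = fun t => Bool.xor (X i t) (Y j t) := by
  intro k
  induction k with
  | zero =>
    intro s 𝒳 𝒴 h
    exact ⟨𝒳, 𝒴, subset_rfl, subset_rfl, by simp, fun X _ Y _ l => l.elim0⟩
  | succ k ih =>
    intro s 𝒳 𝒴 h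
    have hstep : 2 ^ (2 * n * m - m + 2) ≤ 𝒳.card * 𝒴.card := by
      refine le_trans (Nat.pow_le_pow_right (by norm_num) ?_) h
      exact Nat.le_add_right _ _
    obtain ⟨w, hw⟩ := ms_step n m hn hm 𝒳 𝒴 (s (Fin.last k)) hstep
    obtain ⟨𝒳₁, h𝒳₁⟩ : ∃ Z, Z = 𝒳.filter fun X => ∃ i, X i = w := ⟨_, rfl⟩
    obtain ⟨𝒴₁, h𝒴₁⟩ : ∃ Z, Z = 𝒴.filter fun Y =>
        ∃ j, Y j = fun t => Bool.xor (w t) (s (Fin.last k) t) := ⟨_, rfl⟩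
    rw [← h𝒳₁, ← h𝒴₁] at hw
    have hsize1 : 2 ^ (2 * n * m - m + 2 + (2 * n + 2) * k) ≤ 𝒳₁.card * 𝒴₁.card := by
      have h1 : 2 ^ (2 * n + 2) * 2 ^ (2 * n * m - m + 2 + (2 * n + 2) * k)
          = 2 ^ (2 * n * m - m + 2 + (2 * n + 2) * (k + 1)) := by
        rw [← pow_add]
        congr 1
        ring
      have h2 : 2 ^ (2 * n + 2) * 2 ^ (2 * n * m - m + 2 + (2 * n + 2) * k)
          ≤ 2 ^ (2 * n + 2) * (𝒳₁.card * 𝒴₁.card) := by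
        rw [h1]
        exact le_trans h hw
      exact Nat.le_of_mul_le_mul_left h2 (by positivity)
    obtain ⟨𝒳', 𝒴', hs1, hs2, hsz, hprop⟩ :=
      ih (fun l => s l.castSucc) 𝒳₁ 𝒴₁ hsize1
    refine ⟨𝒳', 𝒴', hs1.trans (h𝒳₁ ▸ filter_subset _ _), hs2.trans (h𝒴₁ ▸ filter_subset _ _),
      ?_, ?_⟩
    · calc 𝒳.card * 𝒴.card ≤ 2 ^ (2 * n + 2) * (𝒳₁.card * 𝒴₁.card) := hw
        _ ≤ 2 ^ (2 * n + 2) * (2 ^ ((2 * n + 2) * k) * (𝒳'.card * 𝒴'.card)) :=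
            Nat.mul_le_mul_left _ hsz
        _ = 2 ^ ((2 * n + 2) * (k + 1)) * (𝒳'.card * 𝒴'.card) := by
            rw [← mul_assoc, ← pow_add]
            congr 2
            ring
    · intro X hX Y hY l
      refine Fin.lastCases ?_ ?_ l
      · have hX1 : X ∈ 𝒳₁ := hs1 hX
        have hY1 : Y ∈ 𝒴₁ := hs2 hY
        rw [h𝒳₁, mem_filter] at hX1
        rw [h𝒴₁, mem_filter] at hY1
        obtain ⟨_, i, hi⟩ := hX1
        obtain ⟨_, j, hj⟩ := hY1
        refine ⟨i, j, ?_⟩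
        funext t
        rw [hi, hj]
        simp only
        cases w t <;> cases s (Fin.last k) t <;> rfl
      · intro l'
        exact hprop X hX Y hY l'

/-- Rectangle lower bound against lists of `k` candidate answers: given a large enough rectangle
and `k` strings, there is a large subrectangle on which none of the `k` strings is a solution
to XOR-Missing-String. -/
theorem stmt4 (n m k : ℕ) (hn : 1 ≤ n) (hm : 1 ≤ m) (hk : 1 ≤ k)
    (hm2 : (m : ℝ) < (2 : ℝ) ^ ((n : ℝ) / 2))
    (𝒳 𝒴 : Finset (Fin m → Fin n → Bool))
    (hsize : (2 : ℕ) ^ (2 * n * m - m + 2 + (2 * n + 2) * k) ≤ 𝒳.card * 𝒴.card)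
    (s : Fin k → Fin n → Bool) :
    ∃ 𝒳' 𝒴' : Finset (Fin m → Fin n → Bool),
      𝒳' ⊆ 𝒳 ∧ 𝒴' ⊆ 𝒴 ∧
      ((𝒳.card : ℝ) * (𝒴.card : ℝ)) / 2 ^ ((2 * n + 2) * k) ≤ (𝒳'.card : ℝ) * (𝒴'.card : ℝ) ∧
      ∀ X ∈ 𝒳', ∀ Y ∈ 𝒴', ∀ l : Fin k,
        ∃ i j : Fin m, s l = fun t => Bool.xor (X i t) (Y j t) := by
  obtain ⟨𝒳', 𝒴', hs1, hs2, hsz, hprop⟩ := ms_aux n m hn hm k s 𝒳 𝒴 hsize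
  refine ⟨𝒳', 𝒴', hs1, hs2, ?_, hprop⟩
  rw [div_le_iff₀ (by positivity)]
  have : (𝒳.card * 𝒴.card : ℕ) ≤ (𝒳'.card * 𝒴'.card) * 2 ^ ((2 * n + 2) * k) :=
    hsz.trans_eq (mul_comm _ _)
  calc ((𝒳.card : ℝ) * (𝒴.card : ℝ)) = ((𝒳.card * 𝒴.card : ℕ) : ℝ) := by push_cast; ring
    _ ≤ (((𝒳'.card * 𝒴'.card) * 2 ^ ((2 * n + 2) * k) : ℕ) : ℝ) := by exact_mod_cast this
    _ = (𝒳'.card : ℝ) * (𝒴'.card : ℝ) * 2 ^ ((2 * n + 2) * k) := by push_cast; ring
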